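/- Let α and β be commuting surjective endomorphisms of an abelian group H with finite kernels. Then ker(α) ∩ ker(β) = {1} if and only if the subgroup generated by ker(α) and ker(β) equals ker(α ∘ β). -/

import Mathlib

theorem stmt10 {H : Type*} [CommGroup H] (α β : H →* H)
    (hα : Function.Surjective α) (hβ : Function.Surjective β)
    (hkα : Finite α.ker) (hkβ : Finite β.ker)
    (hc : α.comp β = β.comp α) :
    α.ker ⊓ β.ker = ⊥ ↔ α.ker ⊔ β.ker = (α.comp β).ker := by
  have hc' : ∀ x, α (β x) = β (α x) := fun x => congrFun (congrArg (↑·) hc) x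
  have h1 : α.ker ≤ (α.comp β).ker := by
    intro x hx
    have : α x = 1 := hx
    show α (β x) = 1
    rw [hc', this, map_one]
  have h2 : β.ker ≤ (α.comp β).ker := by
    intro x hx
    have : β x = 1 := hx
    show α (β x) = 1
    rw [this, map_one]
  constructor
  · intro h
    refine le_antisymm (sup_le h1 h2) ?_
    intro x hx
    have hβx : β x ∈ α.ker := by
      have : α (β x) = 1 := hx
      exact this
    -- β maps α.ker to itself
    have hmap : ∀ a : α.ker, β (a : H) ∈ α.ker := by
      intro a
      show α (β (a : H)) = 1
      rw [hc', a.2, map_one]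
    set e : α.ker → α.ker := fun a => ⟨β a, hmap a⟩ with he
    have einj : Function.Injective e := by
      intro a a' hee
      have : β (a : H) = β (a' : H) := congrArg Subtype.val hee
      have hmem : (a : H) * (a' : H)⁻¹ ∈ α.ker ⊓ β.ker := by
        refine Subgroup.mem_inf.mpr ⟨mul_mem a.2 (inv_mem a'.2), ?_⟩
        show β ((a : H) * (a' : H)⁻¹) = 1
        rw [map_mul, map_inv, this, mul_inv_cancel]
      rw [h] at hmem
      have : (a : H) * (a' : H)⁻¹ = 1 := hmem
      ext
      exact mul_inv_eq_one.mp this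
    have esurj : Function.Surjective e := Finite.surjective_of_injective einj
    obtain ⟨a, ha⟩ := esurj ⟨β x, hβx⟩
    have hba : β (a : H) = β x := congrArg Subtype.val ha
    have hb : (a : H)⁻¹ * x ∈ β.ker := by
      show β ((a : H)⁻¹ * x) = 1
      rw [map_mul, map_inv, hba, inv_mul_cancel]
    have : x = (a : H) * ((a : H)⁻¹ * x) := by group
    rw [this]
    exact mul_mem (Subgroup.mem_sup_left a.2) (Subgroup.mem_sup_right hb)
  · intro h
    set K := (α.comp β).ker with hK
    -- the hom φ : K →* α.ker, x ↦ β x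
    have hφmem : ∀ x : K, β (x : H) ∈ α.ker := fun x => x.2
    let φ : K →* α.ker := (β.domRestrict K).codRestrict α.ker hφmem
    have hφsurj : Function.Surjective φ := by
      rintro ⟨k, hk⟩
      obtain ⟨x, hx⟩ := hβ k
      have hxK : x ∈ K := by
        show α (β x) = 1
        rw [hx]; exact hk
      exact ⟨⟨x, hxK⟩, Subtype.ext hx⟩
    have hφker : φ.ker = β.ker.subgroupOf K := by
      ext x
      constructor
      · intro hx
        have : β (x : H) = 1 := congrArg Subtype.val hx
        exact this
      · intro hx
        exact Subtype.ext (hx : β (x : H) = 1)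
    -- multiplication map
    let m : α.ker × β.ker → K := fun p => ⟨(p.1 : H) * (p.2 : H), mul_mem (h1 p.1.2) (h2 p.2.2)⟩
    have hmsurj : Function.Surjective m := by
      rintro ⟨x, hx⟩
      rw [← h] at hx
      obtain ⟨a, ha, b, hb, hab⟩ := Subgroup.mem_sup.mp hx
      exact ⟨(⟨a, ha⟩, ⟨b, hb⟩), Subtype.ext hab⟩
    have : Finite K := Finite.of_surjective m hmsurj
    have hcard1 : Nat.card K = Nat.card (K ⧸ φ.ker) * Nat.card φ.ker :=
      Subgroup.card_eq_card_quotient_mul_card_subgroup φ.ker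
    have hq : Nat.card (K ⧸ φ.ker) = Nat.card α.ker :=
      Nat.card_congr (QuotientGroup.quotientKerEquivOfSurjective φ hφsurj).toEquiv
    have hk2 : Nat.card φ.ker = Nat.card β.ker := by
      rw [hφker]
      exact Nat.card_congr (Subgroup.subgroupOfEquivOfLe h2).toEquiv
    have hcard : Nat.card (α.ker × β.ker) = Nat.card K := by
      rw [Nat.card_prod, hcard1, hq, hk2]
    have hmbij : Function.Bijective m :=
      (Nat.bijective_iff_surjective_and_card m).mpr ⟨hmsurj, hcard⟩
    rw [eq_bot_iff]
    intro x hx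
    have h1x : x ∈ α.ker := hx.1
    have h2x : x ∈ β.ker := hx.2
    have : m (⟨x, h1x⟩, 1) = m (1, ⟨x, h2x⟩) := by
      apply Subtype.ext
      show x * ((1 : β.ker) : H) = ((1 : α.ker) : H) * x
      simp
    have heq := hmbij.1 this
    have : x = ((1 : α.ker) : H) := congrArg (fun p => ((p.1 : α.ker) : H)) heq
    simpa [Subgroup.mem_bot] using this
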